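/- Let r be a directed graph on a vertex type V, let W̄, X̄, V2 be vertex sets with W̄ disjoint from V2, and let N⁺(W̄) := { v | ∃ w ∈ W̄, r w v }. Then for every vertex set D with D ∩ W̄ = ∅: D is a (N⁺(W̄) ∪ X̄)–V2 disconnecting set if and only if D is a (W̄ ∪ X̄)–V2 disconnecting set. -/
import Mathlib


/-- A path in a directed graph `r`: a nonempty duplicate-free list of vertices
in which every pair of consecutive entries is related by `r`. -/
def IsPath {V : Type*} (r : V → V → Prop) (l : List V) : Prop :=
  l ≠ [] ∧ l.Nodup ∧ l.Chain' r

/-- A path from the vertex set `V1` to the vertex set `V2`. -/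
def IsPathFromTo {V : Type*} (r : V → V → Prop) (V1 V2 : Set V) (l : List V) : Prop :=
  IsPath r l ∧ ∀ h : l ≠ [], l.head h ∈ V1 ∧ l.getLast h ∈ V2

/-- `D` is a `V1`–`V2` disconnecting set: every path from `V1` to `V2`
contains a vertex of `D`. -/
def Disconnects {V : Type*} (r : V → V → Prop) (V1 V2 D : Set V) : Prop :=
  ∀ l : List V, IsPathFromTo r V1 V2 l → ∃ v ∈ D, v ∈ l

theorem stmt14 {V : Type*} (r : V → V → Prop) (Wb Xb V2 : Set V)
    (hWV2 : Disjoint Wb V2) (D : Set V) (hDW : D ∩ Wb = ∅) :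
    Disconnects r ({v | ∃ w ∈ Wb, r w v} ∪ Xb) V2 D ↔
      Disconnects r (Wb ∪ Xb) V2 D := by
  constructor
  · intro hd l hl
    obtain ⟨⟨hne, hnd, hch⟩, hends⟩ := hl
    obtain ⟨h1, h2⟩ := hends hne
    rcases h1 with hw | hx
    · -- head ∈ Wb : drop the head
      match l, hne, hnd, hch, hw, h2 with
      | [a], _, _, _, hw, h2 =>
        exact absurd h2 (Set.disjoint_left.mp hWV2 (by simpa using hw))
      | a :: b :: t, _, hnd, hch, hw, h2 =>
        obtain ⟨hrab, hch'⟩ := List.isChain_cons_cons.mp hch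
        obtain ⟨v, hvD, hvl⟩ := hd (b :: t)
          ⟨⟨by simp, hnd.of_cons, hch'⟩, fun h => by
            refine ⟨Or.inl ⟨a, by simpa using hw, hrab⟩, ?_⟩
            simpa [List.getLast_cons] using h2⟩
        exact ⟨v, hvD, List.mem_cons_of_mem a hvl⟩
    · exact hd l ⟨⟨hne, hnd, hch⟩, fun _ => ⟨Or.inr hx, h2⟩⟩
  · intro hd l hl
    obtain ⟨⟨hne, hnd, hch⟩, hends⟩ := hl
    obtain ⟨h1, h2⟩ := hends hne
    rcases h1 with ⟨w, hwW, hrw⟩ | hx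
    · by_cases hwl : w ∈ l
      · -- take the suffix of l starting at w
        obtain ⟨s, t, rfl⟩ := List.append_of_mem hwl
        obtain ⟨v, hvD, hvl⟩ := hd (w :: t)
          ⟨⟨by simp, hnd.sublist (List.sublist_append_right s (w :: t)),
            hch.suffix (List.suffix_append s (w :: t))⟩, fun h => by
            refine ⟨Or.inl hwW, ?_⟩
            rwa [List.getLast_append] at h2⟩
        exact ⟨v, hvD, by simp [hvl]⟩
      · -- prepend w
        obtain ⟨v, hvD, hvl⟩ := hd (w :: l)
          ⟨⟨by simp, List.nodup_cons.mpr ⟨hwl, hnd⟩,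
            List.isChain_cons.mpr ⟨fun y hy => by
              rw [List.head?_eq_head hne] at hy
              cases hy; exact hrw, hch⟩⟩, fun h => by
            refine ⟨Or.inl hwW, ?_⟩
            rwa [List.getLast_cons hne]⟩
        have hvW : v ∉ Wb := fun hvW =>
          Set.eq_empty_iff_forall_notMem.mp hDW v ⟨hvD, hvW⟩
        rcases List.mem_cons.mp hvl with rfl | hvl
        · exact absurd hwW hvW
        · exact ⟨v, hvD, hvl⟩
    · exact hd l ⟨⟨hne, hnd, hch⟩, fun _ => ⟨Or.inr hx, h2⟩⟩
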